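/- arXiv:1007.1311 — 3 statements merged into one kernel-verified Lean document; each statement's English description precedes it below -/
import Mathlib

section
/- If Y is a locally compact, locally connected Hausdorff space and K is a compact subset, then every connected component of the complement of K̂ (the union of K with its relatively compact complementary components) is not relatively compact in Y; equivalently, Y \ K̂ is the union of all unbounded connected components of Y \ K. -/
/-- For `K̂ := K ∪ (union of relatively compact components of Y \ K)`,
every connected component of `Y \ K̂` is not relatively compact; equivalently, `Y \ K̂`
is the union of all unbounded (i.e. non relatively compact) components of `Y \ K`. -/
theorem stmt_1 {Y : Type*} [TopologicalSpace Y] [T2Space Y] [LocallyCompactSpace Y]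
    [LocallyConnectedSpace Y] {K : Set Y} (hK : IsCompact K)
    (Khat : Set Y)
    (hKhat : Khat = K ∪ {y | y ∉ K ∧ IsCompact (closure (connectedComponentIn Kᶜ y))}) :
    (∀ y ∉ Khat, ¬ IsCompact (closure (connectedComponentIn Khatᶜ y))) ∧
    Khatᶜ = {y | y ∉ K ∧ ¬ IsCompact (closure (connectedComponentIn Kᶜ y))} := by
  have h2 : Khatᶜ = {y | y ∉ K ∧ ¬ IsCompact (closure (connectedComponentIn Kᶜ y))} := by
    ext y
    simp only [hKhat, Set.mem_compl_iff, Set.mem_union, Set.mem_setOf_eq]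
    tauto
  refine ⟨fun y hy => ?_, h2⟩
  rw [← Set.mem_compl_iff, h2] at hy
  obtain ⟨hyK, hnc⟩ := hy
  have hKsub : K ⊆ Khat := by rw [hKhat]; exact Set.subset_union_left
  have hsub : connectedComponentIn Kᶜ y ⊆ Khatᶜ := by
    intro z hz
    rw [h2]
    have hzK : z ∉ K := connectedComponentIn_subset Kᶜ y hz
    refine ⟨hzK, ?_⟩
    rw [← connectedComponentIn_eq hz]
    exact hnc
  have heq : connectedComponentIn Khatᶜ y = connectedComponentIn Kᶜ y := by
    apply subset_antisymm
    · exact connectedComponentIn_mono y (Set.compl_subset_compl.mpr hKsub)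
    · exact (isPreconnected_connectedComponentIn).subset_connectedComponentIn
        (mem_connectedComponentIn hyK) hsub
  rw [heq]
  exact hnc
end

section
/- Let Y be a locally compact, locally connected, non-compact Hausdorff space, L a compact subset, and U the interior of L̂ (where L̂ is L together with the relatively compact components of its complement). Then in the one-point compactification Y∞ = Y ∪ {∞}, the set (Y \ L̂) ∪ {∞} is connected, and hence its closure (Y \ U) ∪ {∞} is connected. -/
open OnePoint Set

private theorem infty_mem_closure_image {Y : Type*} [TopologicalSpace Y] {C : Set Y}
    (h : ¬ IsCompact (closure C)) :
    (∞ : OnePoint Y) ∈ closure ((fun y : Y => (y : OnePoint Y)) '' C) := by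
  rw [mem_closure_iff_nhds_basis OnePoint.hasBasis_nhds_infty]
  rintro s ⟨hscl, hsc⟩
  by_cases hsub : C ⊆ s
  · exact absurd (hsc.of_isClosed_subset isClosed_closure (closure_minimal hsub hscl)) h
  · obtain ⟨z, hzC, hzs⟩ := not_subset.mp hsub
    exact ⟨(z : OnePoint Y), ⟨z, hzC, rfl⟩, Or.inl ⟨z, hzs, rfl⟩⟩

private theorem closure_image_union_infty {Y : Type*} [TopologicalSpace Y] (A : Set Y) :
    closure ((fun y : Y => (y : OnePoint Y)) '' A ∪ {(∞ : OnePoint Y)}) =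
      (fun y : Y => (y : OnePoint Y)) '' closure A ∪ {(∞ : OnePoint Y)} := by
  apply subset_antisymm
  · apply closure_minimal
    · exact union_subset_union_left _ (image_mono subset_closure)
    · rw [← isOpen_compl_iff]
      have : ((fun y : Y => (y : OnePoint Y)) '' closure A ∪ {(∞ : OnePoint Y)})ᶜ =
          (fun y : Y => (y : OnePoint Y)) '' (closure A)ᶜ := by
        ext x
        induction x using OnePoint.rec with
        | infty => simp [OnePoint.infty_notMem_image_coe]
        | coe y =>
          simp [OnePoint.coe_ne_infty, OnePoint.coe_eq_coe,
            (OnePoint.coe_injective (X := Y)).mem_set_image]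
      rw [this]
      exact OnePoint.isOpenEmbedding_coe.isOpenMap _ isClosed_closure.isOpen_compl
  · apply union_subset
    · calc (fun y : Y => (y : OnePoint Y)) '' closure A
          ⊆ closure ((fun y : Y => (y : OnePoint Y)) '' A) :=
            (OnePoint.continuous_coe (X := Y)).continuousOn.image_closure.trans
              (closure_mono (by simp))
        _ ⊆ _ := closure_mono subset_union_left
    · exact (subset_union_right).trans subset_closure

/-- For a locally compact, locally connected, non-compact Hausdorff space `Y`,
a compact `L ⊆ Y`, `L̂` the union of `L` with the relatively compact components of `Y \ L`,
and `U` the interior of `L̂`: in the one-point compactification `Y∞`, the set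
`(Y \ L̂) ∪ {∞}` is connected, and hence its closure `(Y \ U) ∪ {∞}` is connected. -/
theorem stmt_2 {Y : Type*} [TopologicalSpace Y] [T2Space Y] [LocallyCompactSpace Y]
    [LocallyConnectedSpace Y] [NoncompactSpace Y] {L : Set Y} (hL : IsCompact L)
    (Lhat U : Set Y)
    (hLhat : Lhat = L ∪ {y | y ∉ L ∧ IsCompact (closure (connectedComponentIn Lᶜ y))})
    (hU : U = interior Lhat) :
    IsConnected ((fun y : Y => (y : OnePoint Y)) '' Lhatᶜ ∪ {(∞ : OnePoint Y)}) ∧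
    closure ((fun y : Y => (y : OnePoint Y)) '' Lhatᶜ ∪ {(∞ : OnePoint Y)}) =
      (fun y : Y => (y : OnePoint Y)) '' Uᶜ ∪ {(∞ : OnePoint Y)} ∧
    IsConnected ((fun y : Y => (y : OnePoint Y)) '' Uᶜ ∪ {(∞ : OnePoint Y)}) := by
  set S := (fun y : Y => (y : OnePoint Y)) '' Lhatᶜ ∪ {(∞ : OnePoint Y)} with hS
  -- membership characterization of Lhatᶜ
  have hmem : ∀ y : Y, y ∈ Lhatᶜ ↔ y ∉ L ∧ ¬ IsCompact (closure (connectedComponentIn Lᶜ y)) := by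
    intro y
    simp only [hLhat, mem_compl_iff, mem_union, mem_setOf_eq, not_or, not_and]
    constructor
    · rintro ⟨h1, h2⟩; exact ⟨h1, h2 h1⟩
    · rintro ⟨h1, h2⟩; exact ⟨h1, fun _ => h2⟩
  have hconnS : IsConnected S := by
    refine ⟨⟨∞, Or.inr rfl⟩, isPreconnected_of_forall (∞ : OnePoint Y) ?_⟩
    rintro p (⟨y, hy, rfl⟩ | hp)
    · -- p = coe y, y ∈ Lhatᶜ
      obtain ⟨hyL, hync⟩ := (hmem y).mp hy
      set C := connectedComponentIn Lᶜ y with hC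
      have hCsub : C ⊆ Lhatᶜ := by
        intro z hz
        have hzL : z ∈ Lᶜ := connectedComponentIn_subset _ _ hz
        have : connectedComponentIn Lᶜ z = C := (connectedComponentIn_eq hz).symm
        exact (hmem z).mpr ⟨hzL, by rw [this]; exact hync⟩
      refine ⟨(fun y : Y => (y : OnePoint Y)) '' C ∪ {(∞ : OnePoint Y)}, ?_, Or.inr rfl, ?_, ?_⟩
      · exact union_subset_union_left _ (image_mono hCsub)
      · exact Or.inl ⟨y, mem_connectedComponentIn hyL, rfl⟩
      · -- preconnected: image of preconnected, plus ∞ which lies in its closure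
        have h1 : IsPreconnected ((fun y : Y => (y : OnePoint Y)) '' C) :=
          (isPreconnected_connectedComponentIn).image _
            (OnePoint.continuous_coe (X := Y)).continuousOn
        refine h1.subset_closure subset_union_left (union_subset subset_closure ?_)
        exact singleton_subset_iff.mpr (infty_mem_closure_image hync)
    · rw [mem_singleton_iff] at hp; subst hp
      exact ⟨{∞}, singleton_subset_iff.mpr (Or.inr rfl), rfl, rfl, isPreconnected_singleton⟩
  have hclo : closure S = (fun y : Y => (y : OnePoint Y)) '' Uᶜ ∪ {(∞ : OnePoint Y)} := by
    rw [hS, closure_image_union_infty, hU, closure_compl]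
  exact ⟨hconnS, hclo, hclo ▸ hconnS.closure⟩
end

section
/- Let d = 2 and let Y ⊆ ℝ² be open. If z ∈ ∂Y is such that for every ε > 0 there exists δ ∈ (0, ε) with ∂B(z, δ) ∩ ∂Y = ∅, then the singleton {z} is the connected component of ∂Y containing z. -/
open Metric

/-- For an open `Y ⊆ ℝ²` and `z ∈ ∂Y` such that arbitrarily small circles
around `z` miss `∂Y`, the singleton `{z}` is the connected component of `z` in `∂Y`. -/
theorem stmt_9 {Y : Set (EuclideanSpace ℝ (Fin 2))} (hY : IsOpen Y)
    {z : EuclideanSpace ℝ (Fin 2)} (hz : z ∈ frontier Y)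
    (hcirc : ∀ ε > (0 : ℝ), ∃ δ, 0 < δ ∧ δ < ε ∧ sphere z δ ∩ frontier Y = ∅) :
    connectedComponentIn (frontier Y) z = {z} := by
  apply Set.eq_singleton_iff_unique_mem.mpr
  refine ⟨mem_connectedComponentIn hz, fun w hw => ?_⟩
  by_contra hne
  have hd : 0 < dist z w := dist_pos.mpr (fun h => hne h.symm)
  obtain ⟨δ, hδ0, hδlt, hsph⟩ := hcirc (dist z w) hd
  have hC : IsPreconnected (connectedComponentIn (frontier Y) z) :=
    isPreconnected_connectedComponentIn
  have hsub := connectedComponentIn_subset (frontier Y) z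
  have hcov : connectedComponentIn (frontier Y) z ⊆ ball z δ ∪ (closedBall z δ)ᶜ := by
    intro x hx
    have hxf : x ∈ frontier Y := hsub hx
    have hne' : dist x z ≠ δ := fun h => Set.eq_empty_iff_forall_notMem.mp hsph x ⟨h, hxf⟩
    rcases lt_or_gt_of_ne hne' with h | h
    · exact Or.inl h
    · exact Or.inr (by simpa [mem_closedBall] using not_le_of_gt h)
  have h1 : (connectedComponentIn (frontier Y) z ∩ ball z δ).Nonempty :=
    ⟨z, mem_connectedComponentIn hz, mem_ball_self hδ0⟩
  have h2 : (connectedComponentIn (frontier Y) z ∩ (closedBall z δ)ᶜ).Nonempty := by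
    refine ⟨w, hw, ?_⟩
    simp only [Set.mem_compl_iff, mem_closedBall, not_le]
    rw [dist_comm]; exact hδlt
  obtain ⟨x, -, hx1, hx2⟩ := hC (ball z δ) (closedBall z δ)ᶜ isOpen_ball
    Metric.isClosed_closedBall.isOpen_compl hcov h1 h2
  exact hx2 (ball_subset_closedBall hx1)
end
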